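/- Every ideal α of a commutative Noetherian ring A is strongly n-absorbing for some positive integer n. -/

import Mathlib

def IsStronglyAbsorbing {A : Type*} [CommRing A] (α : Ideal A) (n : ℕ) : Prop :=
  ∀ γ : Fin (n + 1) → Ideal A, (∏ i, γ i) ≤ α →
    ∃ j, (∏ i ∈ Finset.univ.erase j, γ i) ≤ α

namespace StronglyAbsorbingAux

variable {A : Type*} [CommRing A]

/-- Auxiliary absorbing property in terms of finsets of indices. -/
def QAbs (α : Ideal A) (n : ℕ) : Prop :=
  ∀ {ι : Type} [DecidableEq ι] (s : Finset ι) (γ : ι → Ideal A),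
    (∏ i ∈ s, γ i) ≤ α → ∃ t ⊆ s, t.card ≤ n ∧ (∏ i ∈ t, γ i) ≤ α

lemma prod_anti {ι : Type} {s t : Finset ι} [DecidableEq ι] (h : t ⊆ s) (γ : ι → Ideal A) :
    (∏ i ∈ s, γ i) ≤ ∏ i ∈ t, γ i := by
  rw [← Finset.prod_sdiff h]
  exact Ideal.mul_le_right

lemma prod_le_pow {ι : Type} (t : Finset ι) (γ : ι → Ideal A) {r : Ideal A}
    (h : ∀ i ∈ t, γ i ≤ r) : (∏ i ∈ t, γ i) ≤ r ^ t.card := by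
  classical
  induction t using Finset.induction_on with
  | empty => simp
  | @insert a t ha ih =>
      rw [Finset.prod_insert ha, Finset.card_insert_of_notMem ha, pow_succ, mul_comm (r ^ t.card)]
      exact Ideal.mul_mono (h a (Finset.mem_insert_self a t))
        (ih fun i hi => h i (Finset.mem_insert_of_mem hi))

lemma le_of_mul_le_primary {q I J : Ideal A} (hq : q.IsPrimary) (h : I * J ≤ q)
    (hJ : ¬ J ≤ q.radical) : I ≤ q := by
  obtain ⟨y, hyJ, hy⟩ := Set.not_subset.mp hJ
  intro x hx
  rcases (Ideal.isPrimary_iff.mp hq).2 (h (Ideal.mul_mem_mul hx hyJ)) with h' | h'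
  · exact h'
  · exact absurd h' hy

lemma qabs_of_primary {q : Ideal A} (hq : q.IsPrimary) {n : ℕ}
    (hn : q.radical ^ n ≤ q) : QAbs q n := by
  intro ι _ s γ hs
  induction s using Finset.strongInduction with
  | _ s ih =>
    by_cases hall : ∀ i ∈ s, γ i ≤ q.radical
    · rcases le_or_gt s.card n with hc | hc
      · exact ⟨s, Finset.Subset.refl s, hc, hs⟩
      · obtain ⟨t, hts, htc⟩ := Finset.exists_subset_card_eq hc.le
        refine ⟨t, hts, htc.le, le_trans ?_ hn⟩
        rw [← htc]
        exact prod_le_pow t γ fun i hi => hall i (hts hi)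
    · push_neg at hall
      obtain ⟨i, his, hi⟩ := hall
      have herase : (∏ j ∈ s.erase i, γ j) ≤ q := by
        refine le_of_mul_le_primary hq ?_ hi
        rw [mul_comm, Finset.mul_prod_erase s γ his]
        exact hs
      obtain ⟨t, hts, htc, htq⟩ := ih (s.erase i) (Finset.erase_ssubset his) herase
      exact ⟨t, hts.trans (Finset.erase_subset i s), htc, htq⟩

lemma qabs_inf (t : Finset (Ideal A)) (e : Ideal A → ℕ)
    (ht : ∀ J ∈ t, QAbs J (e J)) : QAbs (t.inf id) (∑ J ∈ t, e J) := by
  classical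
  induction t using Finset.induction_on with
  | empty =>
      intro ι _ s γ _
      exact ⟨∅, Finset.empty_subset s, by simp, by simp⟩
  | @insert J t hJ ih =>
      intro ι _ s γ hs
      rw [Finset.inf_insert] at hs
      obtain ⟨u₁, hu₁s, hu₁c, hu₁⟩ := ht J (Finset.mem_insert_self J t) s γ
        (hs.trans inf_le_left)
      obtain ⟨u₂, hu₂s, hu₂c, hu₂⟩ := ih (fun K hK => ht K (Finset.mem_insert_of_mem hK)) s γ
        (hs.trans inf_le_right)
      refine ⟨u₁ ∪ u₂, Finset.union_subset hu₁s hu₂s, ?_, ?_⟩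
      · calc (u₁ ∪ u₂).card ≤ u₁.card + u₂.card := Finset.card_union_le u₁ u₂
          _ ≤ e J + ∑ K ∈ t, e K := Nat.add_le_add hu₁c hu₂c
          _ = ∑ K ∈ insert J t, e K := (Finset.sum_insert hJ).symm
      · rw [Finset.inf_insert]
        exact le_inf ((prod_anti Finset.subset_union_left γ).trans hu₁)
          ((prod_anti Finset.subset_union_right γ).trans hu₂)

end StronglyAbsorbingAux

theorem exists_stronglyAbsorbing_of_noetherian {A : Type*} [CommRing A]
    [IsNoetherianRing A] (α : Ideal A) :
    ∃ n : ℕ, 0 < n ∧ IsStronglyAbsorbing α n := by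
  classical
  open StronglyAbsorbingAux in
  obtain ⟨t, ht, hprim⟩ := (Ideal.isLasker A A α :
    ∃ t : Finset (Ideal A), t.inf id = α ∧ ∀ ⦃J : Ideal A⦄, J ∈ t → J.IsPrimary)
  have hex : ∀ J ∈ t, ∃ k, Ideal.radical J ^ k ≤ J := fun J _ =>
    Ideal.exists_radical_pow_le_of_fg J (IsNoetherian.noetherian _)
  let e : Ideal A → ℕ := fun J => if h : ∃ k, J.radical ^ k ≤ J then h.choose else 0
  have he : ∀ J ∈ t, Ideal.radical J ^ (e J) ≤ J := by
    intro J hJ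
    have h := hex J hJ
    simp only [e, dif_pos h]
    exact h.choose_spec
  have hq : StronglyAbsorbingAux.QAbs α (∑ J ∈ t, e J) := by
    rw [← ht]
    exact StronglyAbsorbingAux.qabs_inf t e fun J hJ =>
      StronglyAbsorbingAux.qabs_of_primary (hprim hJ) (he J hJ)
  set N := ∑ J ∈ t, e J with hN
  refine ⟨N + 1, Nat.succ_pos N, ?_⟩
  intro γ hγ
  obtain ⟨u, hus, huc, hu⟩ := hq Finset.univ γ hγ
  have hcard : u.card < (Finset.univ : Finset (Fin (N + 1 + 1))).card := by
    rw [Finset.card_univ, Fintype.card_fin]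
    omega
  have hne : u ≠ Finset.univ := fun h => by simp [h] at hcard
  obtain ⟨j, -, hj⟩ := Finset.exists_of_ssubset (Finset.ssubset_univ_iff.mpr hne)
  refine ⟨j, le_trans (StronglyAbsorbingAux.prod_anti ?_ γ) hu⟩
  intro i hi
  rcases eq_or_ne i j with rfl | hij
  · exact absurd hi hj
  · exact Finset.mem_erase.mpr ⟨hij, Finset.mem_univ i⟩
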